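/- Let Ω: TM → V be a virtual immersion. Then the Ricci equation holds: ⟨R^⊥(X,Y)η, ζ⟩ = −⟨(S_η^t S_ζ − S_ζ^t S_η)X, Y⟩ for tangent vectors X,Y and normal vectors η,ζ, where R^⊥ is the curvature of the normal connection D^⊥ and S^t denotes the transpose of the shape operator. -/

import Mathlib

/-
Algebraic (Koszul-style) model of a Riemannian manifold `(M,g)` equipped with a
virtual immersion `Ω : TM → V`:
* `C` is the ring of smooth functions on `M`,
* `VF` is the `C`-module of vector fields on `M`, with Lie `bracket` and
  derivation action `act : VF → C → C`,
* `g : VF → VF → C` is the Riemannian metric,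
* `V` is the `C`-module of sections of the trivial bundle `M × V`, with the
  (pointwise) inner product `ip : V → V → C`,
* `Ω : VF →ₗ[C] V` is the virtual immersion (a `V`-valued one-form),
* `D : VF → V → V` is the flat connection on `M × V`,
* `tang : V →ₗ[C] VF` is the tangential part: it is characterized by
  `ip v (Ω Z) = g (tang v) Z`, so `Ω (tang v)` is the orthogonal projection of
  `v` onto `Ω(TM)` and `v - Ω (tang v)` is the normal part of `v`.
-/

variable {C : Type*} [CommRing C]
variable {VF : Type*} [AddCommGroup VF] [Module C VF]
variable {V : Type*} [AddCommGroup V] [Module C V]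

/-- The tangential connection `D^T_X Y = (D_X (Ω Y))^T`, viewed as a vector field. -/
def DT (Ω : VF →ₗ[C] V) (D : VF → V → V) (tang : V →ₗ[C] VF) (X Y : VF) : VF :=
  tang (D X (Ω Y))

/-- The second fundamental form `II(X,Y) = (D_X (Ω Y))^⊥`. -/
def II (Ω : VF →ₗ[C] V) (D : VF → V → V) (tang : V →ₗ[C] VF) (X Y : VF) : V :=
  D X (Ω Y) - Ω (tang (D X (Ω Y)))

/-- The shape operator `S_η(X) = -(D_X η)^T`. -/
def Shape (D : VF → V → V) (tang : V →ₗ[C] VF) (η : V) (X : VF) : VF :=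
  - tang (D X η)

/-- The curvature tensor `R(X,Y)Z = ∇_Y ∇_X Z - ∇_X ∇_Y Z + ∇_{[X,Y]} Z`,
where `∇ = D^T` is the Levi-Civita connection of `g` (valid for a virtual
immersion). -/
def Rcurv (Ω : VF →ₗ[C] V) (D : VF → V → V) (tang : V →ₗ[C] VF)
    (bracket : VF → VF → VF) (X Y Z : VF) : VF :=
  DT Ω D tang Y (DT Ω D tang X Z) - DT Ω D tang X (DT Ω D tang Y Z)
    + DT Ω D tang (bracket X Y) Z

/-- The normal connection `D^⊥_X η = (D_X η)^⊥`. -/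
def Dperp (Ω : VF →ₗ[C] V) (D : VF → V → V) (tang : V →ₗ[C] VF) (X : VF) (η : V) : V :=
  D X η - Ω (tang (D X η))

/-- The curvature of the normal connection (same sign convention as `Rcurv`). -/
def Rperp (Ω : VF →ₗ[C] V) (D : VF → V → V) (tang : V →ₗ[C] VF)
    (bracket : VF → VF → VF) (X Y : VF) (η : V) : V :=
  Dperp Ω D tang Y (Dperp Ω D tang X η) - Dperp Ω D tang X (Dperp Ω D tang Y η)
    + Dperp Ω D tang (bracket X Y) η

/-- The covariant derivative of the second fundamental form,
`(D_X II)(Y,Z) = D_X (II(Y,Z)) - II(∇_X Y, Z) - II(Y, ∇_X Z)`. -/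
def DII (Ω : VF →ₗ[C] V) (D : VF → V → V) (tang : V →ₗ[C] VF) (X Y Z : VF) : V :=
  D X (II Ω D tang Y Z) - II Ω D tang (DT Ω D tang X Y) Z
    - II Ω D tang Y (DT Ω D tang X Z)

/-- Ricci's equation
`⟨R^⊥(X,Y)η, ζ⟩ = -⟨(S_η^t S_ζ - S_ζ^t S_η) X, Y⟩` for a virtual immersion and
normal sections `η, ζ`.  Here `⟨S_η^t (S_ζ X), Y⟩ = ⟨S_ζ X, S_η Y⟩`, so the
right-hand side is written out using the metric `g`. -/
theorem stmt4
    (act : VF → C → C) (bracket : VF → VF → VF) (g : VF → VF → C) (ip : V → V → C)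
    (Ω : VF →ₗ[C] V) (D : VF → V → V) (tang : V →ₗ[C] VF)
    (h_act_add : ∀ X (f f' : C), act X (f + f') = act X f + act X f')
    (h_act_mul : ∀ X (f f' : C), act X (f * f') = f * act X f' + f' * act X f)
    (h_br_skew : ∀ X Y, bracket X Y = - bracket Y X)
    (h_br_leib : ∀ X (f : C) Y, bracket X (f • Y) = act X f • Y + f • bracket X Y)
    (h_g_symm : ∀ X Y, g X Y = g Y X)
    (h_g_addl : ∀ X X' Y, g (X + X') Y = g X Y + g X' Y)
    (h_g_smull : ∀ (f : C) X Y, g (f • X) Y = f * g X Y)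
    (h_g_nondeg : ∀ X, (∀ Y, g X Y = 0) → X = 0)
    (h_ip_symm : ∀ u v, ip u v = ip v u)
    (h_ip_addl : ∀ u u' v, ip (u + u') v = ip u v + ip u' v)
    (h_ip_smull : ∀ (f : C) u v, ip (f • u) v = f * ip u v)
    (hD_addX : ∀ X X' v, D (X + X') v = D X v + D X' v)
    (hD_smulX : ∀ (f : C) X v, D (f • X) v = f • D X v)
    (hD_addv : ∀ X u v, D X (u + v) = D X u + D X v)
    (hD_leib : ∀ X (f : C) v, D X (f • v) = act X f • v + f • D X v)
    (hD_flat : ∀ X Y v, D X (D Y v) - D Y (D X v) = D (bracket X Y) v)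
    (hD_ip : ∀ X u v, act X (ip u v) = ip (D X u) v + ip u (D X v))
    (h_tang : ∀ v Z, ip v (Ω Z) = g (tang v) Z)
    (ha : ∀ X Y, ip (Ω X) (Ω Y) = g X Y)
    (hb : ∀ X Y Z, ip (D X (Ω Y) - D Y (Ω X) - Ω (bracket X Y)) (Ω Z) = 0) :
    ∀ (X Y : VF) (η ζ : V), (∀ Z, ip η (Ω Z) = 0) → (∀ Z, ip ζ (Ω Z) = 0) →
      ip (Rperp Ω D tang bracket X Y η) ζ =
        -(g (Shape D tang ζ X) (Shape D tang η Y)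
          - g (Shape D tang η X) (Shape D tang ζ Y)) := by
  intro X Y η ζ hη hζ
  -- basic derivation facts
  have act0 : ∀ X', act X' (0:C) = 0 := by
    intro X'
    have h := h_act_add X' 0 0
    rw [add_zero] at h
    exact (right_eq_add.mp h)
  have act1 : ∀ X', act X' (1:C) = 0 := by
    intro X'
    have h := h_act_mul X' 1 1
    simp only [one_mul, mul_one] at h
    exact (right_eq_add.mp h)
  have actneg1 : ∀ X', act X' (-1:C) = 0 := by
    intro X'
    have h := h_act_add X' 1 (-1)
    rw [add_neg_cancel, act0, act1] at h
    linear_combination -h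
  have hD_neg : ∀ X' v, D X' (-v) = - D X' v := by
    intro X' v
    rw [← neg_one_smul C v, hD_leib, actneg1, zero_smul, zero_add, neg_one_smul]
  have hD_sub : ∀ X' u v, D X' (u - v) = D X' u - D X' v := by
    intro X' u v
    rw [sub_eq_add_neg, hD_addv, hD_neg, ← sub_eq_add_neg]
  have hD_negX : ∀ X' v, D (-X') v = - D X' v := by
    intro X' v
    rw [← neg_one_smul C X', hD_smulX, neg_one_smul]
  have ip_negl : ∀ u v, ip (-u) v = - ip u v := by
    intro u v
    rw [← neg_one_smul C u, h_ip_smull]; ring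
  have ip_subl : ∀ u v w, ip (u - v) w = ip u w - ip v w := by
    intro u v w
    rw [sub_eq_add_neg, h_ip_addl, ip_negl, ← sub_eq_add_neg]
  have g_negl : ∀ a b, g (-a) b = - g a b := by
    intro a b
    rw [← neg_one_smul C a, h_g_smull]; ring
  have g_negneg : ∀ a b, g (-a) (-b) = g a b := by
    intro a b
    rw [g_negl, h_g_symm, g_negl, h_g_symm]; ring
  have ip_Omega_zeta : ∀ W, ip (Ω W) ζ = 0 := by
    intro W; rw [h_ip_symm]; exact hζ W
  -- projecting along ζ kills the tangential correction
  have key : ∀ (X' : VF) (u : V), ip (Dperp Ω D tang X' u) ζ = ip (D X' u) ζ := by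
    intro X' u
    simp only [Dperp]
    rw [ip_subl, ip_Omega_zeta, sub_zero]
  -- ⟨D_X' (Ω W), ζ⟩ = -g(tang(D_X' ζ), W)
  have B : ∀ (X' W : _), ip (D X' (Ω W)) ζ = - g (tang (D X' ζ)) W := by
    intro X' W
    have h := hD_ip X' (Ω W) ζ
    rw [ip_Omega_zeta, act0] at h
    rw [h_ip_symm (Ω W), h_tang] at h
    linear_combination -h
  have h1 : ip (Rperp Ω D tang bracket X Y η) ζ =
      (ip (D Y (D X η)) ζ + g (tang (D Y ζ)) (tang (D X η)))
        - (ip (D X (D Y η)) ζ + g (tang (D X ζ)) (tang (D Y η)))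
        + ip (D (bracket X Y) η) ζ := by
    have e1 : ip (Dperp Ω D tang Y (Dperp Ω D tang X η)) ζ =
        ip (D Y (D X η)) ζ + g (tang (D Y ζ)) (tang (D X η)) := by
      rw [key]
      show ip (D Y (D X η - Ω (tang (D X η)))) ζ = _
      rw [hD_sub, ip_subl, B Y (tang (D X η))]; ring
    have e2 : ip (Dperp Ω D tang X (Dperp Ω D tang Y η)) ζ =
        ip (D X (D Y η)) ζ + g (tang (D X ζ)) (tang (D Y η)) := by
      rw [key]
      show ip (D X (D Y η - Ω (tang (D Y η)))) ζ = _
      rw [hD_sub, ip_subl, B X (tang (D Y η))]; ring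
    have e3 := key (bracket X Y) η
    simp only [Rperp]
    rw [h_ip_addl, ip_subl, e1, e2, e3]
  have h2 : ip (D Y (D X η)) ζ - ip (D X (D Y η)) ζ + ip (D (bracket X Y) η) ζ = 0 := by
    have hf : D Y (D X η) - D X (D Y η) = - D (bracket X Y) η := by
      rw [hD_flat, h_br_skew Y X, hD_negX]
    rw [← ip_subl, hf, ip_negl]; ring
  have h3 : -(g (Shape D tang ζ X) (Shape D tang η Y)
        - g (Shape D tang η X) (Shape D tang ζ Y)) =
      g (tang (D Y ζ)) (tang (D X η)) - g (tang (D X ζ)) (tang (D Y η)) := by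
    simp only [Shape]
    rw [g_negneg, g_negneg, h_g_symm (tang (D X η)) (tang (D Y ζ))]; ring
  linear_combination h1 - h3 + h2
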